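/- For every even positive integer n, the Bernoulli number B_n plus the sum of 1/p over all primes p with (p-1) | n is an integer. -/

import Mathlib

open Finset

/-- `f j n = Σ_{v=0}^{j} (-1)^v C(j,v) v^n`, the (signed) `j`-th finite difference of `x^n` at 0. -/
def vsf (j n : ℕ) : ℤ := ∑ v ∈ range (j + 1), (-1) ^ v * (j.choose v : ℤ) * (v : ℤ) ^ n

lemma vsf_zero (n : ℕ) : vsf 0 n = 0 ^ n := by simp [vsf]

lemma vsf_n_zero (j : ℕ) : vsf j 0 = if j = 0 then 1 else 0 := by
  simpa [vsf, mul_comm] using (Int.alternating_sum_range_choose (n := j))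

/-- Pascal: `Σ_v (-1)^v C(j,v) (v+1)^n = vsf j n - vsf (j+1) n`. -/
lemma vsf_pascal (j n : ℕ) :
    ∑ v ∈ range (j + 1), (-1 : ℤ) ^ v * (j.choose v : ℤ) * ((v : ℤ) + 1) ^ n
      = vsf j n - vsf (j + 1) n := by
  have h1 : vsf (j+1) n
      = ∑ i ∈ range (j + 1), (-1:ℤ)^(i+1) * ((j+1).choose (i+1) : ℤ) * ((i:ℤ)+1)^n
        + (-1:ℤ)^0 * ((j+1).choose 0 : ℤ) * (0:ℤ)^n := by
    rw [vsf, sum_range_succ']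
    push_cast
    ring_nf
  have h2 : vsf j n
      = ∑ i ∈ range j, (-1:ℤ)^(i+1) * (j.choose (i+1) : ℤ) * ((i:ℤ)+1)^n
        + (-1:ℤ)^0 * (j.choose 0 : ℤ) * (0:ℤ)^n := by
    rw [vsf, sum_range_succ']
    push_cast
    ring_nf
  have h3 : ∑ i ∈ range (j+1), (-1:ℤ)^(i+1) * (j.choose (i+1) : ℤ) * ((i:ℤ)+1)^n
      = ∑ i ∈ range j, (-1:ℤ)^(i+1) * (j.choose (i+1) : ℤ) * ((i:ℤ)+1)^n := by
    rw [sum_range_succ, Nat.choose_succ_self]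
    simp
  have h4 : ∀ i, ((j+1).choose (i+1) : ℤ) = (j.choose i : ℤ) + (j.choose (i+1) : ℤ) := by
    intro i; rw [Nat.choose_succ_succ]; push_cast; ring
  calc ∑ v ∈ range (j + 1), (-1 : ℤ) ^ v * (j.choose v : ℤ) * ((v : ℤ) + 1) ^ n
      = ∑ i ∈ range (j+1), ((-1:ℤ)^(i+1) * (j.choose (i+1) : ℤ) * ((i:ℤ)+1)^n
          - (-1:ℤ)^(i+1) * ((j+1).choose (i+1) : ℤ) * ((i:ℤ)+1)^n) := by
        apply sum_congr rfl; intro i _; rw [h4 i]; ring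
    _ = vsf j n - vsf (j + 1) n := by
        rw [sum_sub_distrib, h3]
        simp only [Nat.choose_zero_right] at h1 h2
        linarith [h1, h2]

/-- Recurrence: `vsf (j+1) (n+1) = (j+1) * (vsf (j+1) n - vsf j n)`. -/
lemma vsf_rec (j n : ℕ) :
    vsf (j + 1) (n + 1) = ((j : ℤ) + 1) * (vsf (j + 1) n - vsf j n) := by
  have step : ∀ i ∈ range (j + 1),
      (-1:ℤ)^(i+1) * (((j+1).choose (i+1) : ℕ) : ℤ) * ((i:ℤ)+1)^(n+1)
        = ((j:ℤ)+1) * (-((-1:ℤ)^i * ((j.choose i : ℕ) : ℤ) * ((i:ℤ)+1)^n)) := by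
    intro i _
    have hc : (((j+1).choose (i+1) * (i+1) : ℕ) : ℤ) = ((j+1) * j.choose i : ℕ) := by
      rw [← Nat.add_one_mul_choose_eq]
    push_cast at hc
    have : ((i:ℤ)+1)^(n+1) = ((i:ℤ)+1)^n * ((i:ℤ)+1) := by ring
    rw [this]
    calc (-1:ℤ)^(i+1) * (((j+1).choose (i+1) : ℕ) : ℤ) * (((i:ℤ)+1)^n * ((i:ℤ)+1))
        = (-1:ℤ)^(i+1) * ((((j+1).choose (i+1) : ℕ) : ℤ) * ((i:ℤ)+1)) * ((i:ℤ)+1)^n := by ring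
      _ = (-1:ℤ)^(i+1) * (((j:ℤ)+1) * (j.choose i : ℤ)) * ((i:ℤ)+1)^n := by rw [hc]
      _ = ((j:ℤ)+1) * (-((-1:ℤ)^i * ((j.choose i : ℕ) : ℤ) * ((i:ℤ)+1)^n)) := by ring
  have h0 : vsf (j + 1) (n + 1)
      = ∑ i ∈ range (j + 1), (-1:ℤ)^(i+1) * (((j+1).choose (i+1) : ℕ) : ℤ) * ((i:ℤ)+1)^(n+1) := by
    rw [vsf, sum_range_succ']
    simp [zero_pow (Nat.succ_ne_zero n)]
  rw [h0, sum_congr rfl step, ← mul_sum, sum_neg_distrib, vsf_pascal]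
  ring

/-- `vsf j n = 0` when `n < j`. -/
lemma vsf_eq_zero {n j : ℕ} (h : n < j) : vsf j n = 0 := by
  induction n generalizing j with
  | zero =>
      rw [vsf_n_zero, if_neg (by omega)]
  | succ n ih =>
      obtain ⟨j, rfl⟩ : ∃ j', j = j' + 1 := ⟨j - 1, by omega⟩
      rw [vsf_rec, ih (by omega), ih (by omega)]
      ring

lemma factorial_dvd_vsf (j n : ℕ) : ((j.factorial : ℕ) : ℤ) ∣ vsf j n := by
  induction n generalizing j with
  | zero =>
      rw [vsf_n_zero]
      rcases Nat.eq_zero_or_pos j with rfl | hj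
      · simp
      · rw [if_neg (by omega)]; exact dvd_zero _
  | succ n ih =>
      rcases Nat.eq_zero_or_pos j with rfl | hj
      · simp [vsf_zero]
      obtain ⟨j, rfl⟩ : ∃ j', j = j' + 1 := ⟨j - 1, by omega⟩
      rw [vsf_rec, mul_sub]
      apply dvd_sub
      · exact Dvd.dvd.mul_left (ih (j+1)) _
      · have : ((((j+1).factorial : ℕ)) : ℤ) = ((j:ℤ)+1) * ((j.factorial : ℕ) : ℤ) := by
          rw [Nat.factorial_succ]; push_cast; ring
        rw [this]
        exact mul_dvd_mul_left _ (ih j)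

/-- The "log(exp) = X" identity, coefficientwise:
`Σ_{j=1}^{m} vsf j m / j = -[m = 1]`. -/
lemma vsf_log (m : ℕ) (hm : 0 < m) :
    ∑ j ∈ range m, (vsf (j+1) m : ℚ) / (j+1) = if m = 1 then -1 else 0 := by
  obtain ⟨m, rfl⟩ : ∃ m', m = m' + 1 := ⟨m - 1, by omega⟩
  have step : ∀ j ∈ range (m+1),
      (vsf (j+1) (m+1) : ℚ) / (j+1) = ((vsf (j+1) m : ℚ) - (vsf j m : ℚ)) := by
    intro j _
    rw [vsf_rec]
    push_cast
    rw [mul_comm, mul_div_assoc, div_self (by positivity), mul_one]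
  rw [sum_congr rfl step]
  have := Finset.sum_range_sub (fun j => (vsf j m : ℚ)) (m+1)
  rw [this, vsf_eq_zero (by omega), vsf_zero]
  rcases Nat.eq_zero_or_pos m with rfl | hm'
  · norm_num
  · rw [zero_pow (by omega), if_neg (by omega)]
    norm_num

/-- Candidate Bernoulli numbers. -/
noncomputable def vsb (n : ℕ) : ℚ := ∑ k ∈ range (n + 1), (vsf k n : ℚ) / (k + 1)

lemma vsf_binom_sum (m j : ℕ) :
    ∑ k ∈ range m, (m.choose k : ℤ) * vsf j k = -vsf (j + 1) m := by
  have binom : ∀ v : ℕ, ∑ k ∈ range m, (m.choose k : ℤ) * (v:ℤ)^k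
      = ((v:ℤ)+1)^m - (v:ℤ)^m := by
    intro v
    have h := add_pow (v:ℤ) 1 m
    simp only [one_pow, mul_one] at h
    rw [sum_range_succ, Nat.choose_self, Nat.cast_one, mul_one] at h
    rw [eq_sub_iff_add_eq, h, add_left_inj]
    apply sum_congr rfl; intros; ring
  calc ∑ k ∈ range m, (m.choose k : ℤ) * vsf j k
      = ∑ k ∈ range m, ∑ v ∈ range (j+1),
          (-1:ℤ)^v * (j.choose v : ℤ) * ((m.choose k : ℤ) * (v:ℤ)^k) := by
        apply sum_congr rfl; intro k _
        rw [vsf, mul_sum]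
        apply sum_congr rfl; intro v _; ring
    _ = ∑ v ∈ range (j+1), (-1:ℤ)^v * (j.choose v : ℤ)
          * (∑ k ∈ range m, (m.choose k : ℤ) * (v:ℤ)^k) := by
        rw [sum_comm]
        apply sum_congr rfl; intro v _
        rw [mul_sum]
    _ = ∑ v ∈ range (j+1), ((-1:ℤ)^v * (j.choose v : ℤ) * ((v:ℤ)+1)^m
          - (-1:ℤ)^v * (j.choose v : ℤ) * (v:ℤ)^m) := by
        apply sum_congr rfl; intro v _
        rw [binom v]; ring
    _ = -vsf (j + 1) m := by
        rw [sum_sub_distrib, vsf_pascal]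
        rw [show (∑ v ∈ range (j+1), (-1:ℤ)^v * (j.choose v : ℤ) * (v:ℤ)^m) = vsf j m from rfl]
        ring

lemma vsb_sum (m : ℕ) :
    ∑ k ∈ range m, (m.choose k : ℚ) * vsb k = if m = 1 then 1 else 0 := by
  rcases Nat.eq_zero_or_pos m with rfl | hm
  · simp
  have ext : ∀ k ∈ range m, (m.choose k : ℚ) * vsb k
      = ∑ j ∈ range m, (m.choose k : ℚ) * ((vsf j k : ℚ) / (j + 1)) := by
    intro k hk
    rw [mem_range] at hk
    rw [vsb, mul_sum]
    apply sum_subset (by intro x hx; rw [mem_range] at *; omega)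
    intro j _ hj
    rw [mem_range, not_lt] at hj
    rw [vsf_eq_zero (by omega)]
    simp
  rw [sum_congr rfl ext, sum_comm]
  have inner : ∀ j ∈ range m, ∑ k ∈ range m, (m.choose k : ℚ) * ((vsf j k : ℚ) / (j + 1))
      = -((vsf (j+1) m : ℚ) / (j + 1)) := by
    intro j _
    have : ∑ k ∈ range m, (m.choose k : ℚ) * (vsf j k : ℚ)
        = ((-vsf (j + 1) m : ℤ) : ℚ) := by
      rw [← vsf_binom_sum m j]; push_cast; ring_nf
    calc ∑ k ∈ range m, (m.choose k : ℚ) * ((vsf j k : ℚ) / (j + 1))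
        = (∑ k ∈ range m, (m.choose k : ℚ) * (vsf j k : ℚ)) / (j+1) := by
          rw [sum_div]; apply sum_congr rfl; intro k _; ring
      _ = -((vsf (j+1) m : ℚ) / (j + 1)) := by rw [this]; push_cast; ring
  rw [sum_congr rfl inner, sum_neg_distrib, vsf_log m hm]
  by_cases h1 : m = 1 <;> simp [h1]

/-- Worpitzky-type formula: `bernoulli n = Σ_{k=0}^n vsf k n / (k+1)`. -/
lemma bernoulli_eq_vsb (n : ℕ) : bernoulli n = vsb n := by
  induction n using Nat.strong_induction_on with
  | _ n ih =>
    have h1 := vsb_sum (n+1)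
    have h2 := sum_bernoulli (n+1)
    rw [sum_range_succ] at h1 h2
    have h3 : ∑ k ∈ range n, ((n+1).choose k : ℚ) * vsb k
        = ∑ k ∈ range n, ((n+1).choose k : ℚ) * bernoulli k := by
      apply sum_congr rfl; intro k hk
      rw [mem_range] at hk
      rw [ih k hk]
    rw [Nat.choose_succ_self_right] at h1 h2
    have h4 : ((n:ℚ)+1) * vsb n = ((n:ℚ)+1) * bernoulli n := by
      push_cast at h1 h2 ⊢
      linarith [h1, h2, h3]
    have := mul_left_cancel₀ (show ((n:ℚ)+1) ≠ 0 by positivity) h4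
    exact this.symm

lemma mul_dvd_factorial' {a b k : ℕ} (ha : 1 ≤ a) (hak : a ≤ k) (hb : 1 ≤ b)
    (hbk : b ≤ k) (hab : a ≠ b) : a * b ∣ k.factorial := by
  rw [← Finset.prod_Ico_id_eq_factorial]
  have hsub : ({a, b} : Finset ℕ) ⊆ Ico 1 (k + 1) := by
    intro x hx
    simp only [mem_insert, mem_singleton] at hx
    rw [mem_Ico]
    rcases hx with rfl | rfl <;> omega
  have h := Finset.prod_dvd_prod_of_subset _ _ (fun x => x) hsub
  rwa [Finset.prod_pair hab] at h

lemma composite_dvd_factorial {k : ℕ} (hnp : ¬(k + 1).Prime) (h4 : k + 1 ≠ 4) :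
    (k + 1) ∣ k.factorial := by
  rcases Nat.eq_zero_or_pos k with rfl | hk
  · simp
  have h2 : 2 ≤ k + 1 := by omega
  obtain ⟨a, hdvd, ha2, halt⟩ := Nat.exists_dvd_of_not_prime2 h2 hnp
  obtain ⟨b, hab⟩ := hdvd
  have hb0 : 0 < b := Nat.pos_of_ne_zero (by rintro rfl; simp at hab)
  have hb2 : 2 ≤ b := by
    rcases Nat.lt_or_ge b 2 with h | h
    · interval_cases b <;> omega
    · exact h
  have hblt : b < k + 1 := by nlinarith
  rcases eq_or_ne a b with rfl | hne
  · -- k + 1 = a ^ 2, a ≥ 3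
    have ha3 : 3 ≤ a := by
      rcases Nat.lt_or_ge a 3 with h | h
      · interval_cases a <;> omega
      · exact h
    have h1 : a * (2 * a) ∣ k.factorial := by
      apply mul_dvd_factorial' (by omega) (by nlinarith) (by omega) (by nlinarith) (by omega)
    exact dvd_trans ⟨2, by rw [hab]; ring⟩ h1
  · rw [hab]
    exact mul_dvd_factorial' (by omega) (by omega) (by omega) (by omega) hne

lemma choose_sub_one_cast {p : ℕ} (hp : p.Prime) :
    ∀ v, v ≤ p - 1 → (((p - 1).choose v : ℕ) : ZMod p) = (-1) ^ v := by
  haveI : Fact p.Prime := ⟨hp⟩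
  intro v
  induction v with
  | zero => simp
  | succ v ih =>
      intro hv1
      have ih' := ih (by omega)
      have h := Nat.choose_succ_right_eq (p - 1) v
      have hcast : (((p - 1).choose (v + 1) * (v + 1) : ℕ) : ZMod p)
          = (((p - 1).choose v * (p - 1 - v) : ℕ) : ZMod p) := by rw [h]
      push_cast at hcast
      have hs2 : (((p - 1 - v : ℕ) : ZMod p)) = -1 - v := by
        rw [Nat.cast_sub (by omega : v ≤ p - 1), Nat.cast_sub hp.one_le, ZMod.natCast_self,
          Nat.cast_one]
        ring
      rw [ih', hs2] at hcast
      have hne : ((v : ZMod p) + 1) ≠ 0 := by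
        have : (((v + 1 : ℕ)) : ZMod p) ≠ 0 := by
          rw [Ne, ZMod.natCast_eq_zero_iff]
          intro hdvd
          have := Nat.le_of_dvd (by omega) hdvd
          omega
        push_cast at this
        exact this
      apply mul_right_cancel₀ hne
      rw [hcast]
      ring

lemma vsf_prime_dvd {p n : ℕ} (hp : p.Prime) (hn : 0 < n) :
    (p : ℤ) ∣ vsf (p - 1) n + (if (p - 1) ∣ n then 1 else 0) := by
  haveI : Fact p.Prime := ⟨hp⟩
  rw [← ZMod.intCast_zmod_eq_zero_iff_dvd]
  have hv : ((vsf (p - 1) n : ℤ) : ZMod p) = ∑ v ∈ range p, (v : ZMod p) ^ n := by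
    rw [vsf]
    push_cast
    rw [show p - 1 + 1 = p from Nat.succ_pred_eq_of_pos hp.pos]
    apply sum_congr rfl
    intro v hv
    rw [mem_range] at hv
    rw [choose_sub_one_cast hp v (by omega), ← mul_pow]
    norm_num
  have huniv : ∑ v ∈ range p, (v : ZMod p) ^ n = ∑ x : ZMod p, x ^ n := by
    refine Finset.sum_nbij' (fun v => ((v : ℕ) : ZMod p)) (fun x => x.val)
      (fun v _ => mem_univ _) (fun x _ => mem_range.mpr (ZMod.val_lt x))
      (fun v hv => ZMod.val_cast_of_lt (mem_range.mp hv))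
      (fun x _ => ZMod.natCast_zmod_val x) (fun v _ => rfl)
  have hunits : ∑ x : ZMod p, x ^ n = ∑ x : (ZMod p)ˣ, (x : ZMod p) ^ n := by
    classical
    let φ : (ZMod p)ˣ ↪ ZMod p := ⟨fun x => x, fun _ _ h => Units.ext h⟩
    have himg : Finset.univ.map φ = Finset.univ \ {0} := by
      ext x
      simp only [mem_map, mem_univ, Function.Embedding.coeFn_mk, true_and, mem_sdiff,
        mem_singleton, φ]
      exact isUnit_iff_ne_zero
    have h2 : ∑ x ∈ Finset.univ.map φ, x ^ n = ∑ u : (ZMod p)ˣ, ((u : ZMod p)) ^ n := by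
      rw [Finset.sum_map]
      simp only [φ, Function.Embedding.coeFn_mk]
      rfl
    have h1 : ∑ x ∈ (Finset.univ \ {0} : Finset (ZMod p)), x ^ n = ∑ x : ZMod p, x ^ n := by
      apply Finset.sum_subset Finset.sdiff_subset
      intro x _ hx
      have hx0 : x = 0 := by
        simp only [mem_sdiff, mem_univ, true_and, mem_singleton, not_not] at hx
        exact hx
      rw [hx0, zero_pow (by omega)]
    rw [← h1, ← himg, h2]
  have hcard : Fintype.card (ZMod p) - 1 = p - 1 := by rw [ZMod.card]
  rw [Int.cast_add, hv, huniv, hunits, FiniteField.sum_pow_units, hcard]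
  by_cases hd : (p - 1) ∣ n <;> simp [hd]

lemma vsf_four_dvd {n : ℕ} (hn : 0 < n) (he : Even n) : (4 : ℤ) ∣ vsf 3 n := by
  obtain ⟨m, rfl⟩ := he
  have hm : 0 < m := by omega
  have : ((vsf 3 (m + m) : ℤ) : ZMod 4) = 0 := by
    rw [vsf]
    push_cast
    rw [Finset.sum_range_succ, Finset.sum_range_succ, Finset.sum_range_succ,
      Finset.sum_range_succ, Finset.range_zero, Finset.sum_empty]
    norm_num
    have h2 : (2 : ZMod 4) ^ (m + m) = 0 := by
      rw [← two_mul, pow_mul, show (2 : ZMod 4) ^ 2 = 0 by decide, zero_pow hm.ne']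
    have h3 : (3 : ZMod 4) ^ (m + m) = 1 := by
      rw [show (3 : ZMod 4) = -1 by decide, ← two_mul, pow_mul]
      norm_num
    rw [h2, h3, zero_pow (by omega : m + m ≠ 0)]
    decide
  exact_mod_cast (ZMod.intCast_zmod_eq_zero_iff_dvd _ 4).mp this

lemma vsf_term_dvd (n k : ℕ) (hn : 0 < n) (he : Even n) :
    ((k : ℤ) + 1) ∣ vsf k n + (if (k + 1).Prime ∧ k ∣ n then 1 else 0) := by
  by_cases hp : (k + 1).Prime
  · have h := vsf_prime_dvd hp hn
    rw [Nat.add_sub_cancel] at h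
    have : ((k + 1 : ℕ) : ℤ) = (k : ℤ) + 1 := by push_cast; ring
    rw [← this]
    simpa [hp] using h
  · rw [if_neg (by tauto), add_zero]
    by_cases h4 : k + 1 = 4
    · have hk : k = 3 := by omega
      subst hk
      exact_mod_cast vsf_four_dvd hn he
    · calc ((k : ℤ) + 1) ∣ ((k.factorial : ℕ) : ℤ) := by
            exact_mod_cast Int.natCast_dvd_natCast.mpr (composite_dvd_factorial hp h4)
        _ ∣ vsf k n := factorial_dvd_vsf k n

/-- Clausen–von Staudt: for even positive `n`, `B_n + ∑_{p-1 ∣ n} 1/p` is an integer. -/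
theorem clausen_von_staudt (n : ℕ) (hn : 0 < n) (he : Even n) :
    ∃ z : ℤ, bernoulli n +
      ∑ p ∈ (Finset.range (n + 2)).filter (fun p => p.Prime ∧ (p - 1) ∣ n),
        (1 : ℚ) / p = z := by
  classical
  set c : ℕ → ℤ := fun k => if (k + 1).Prime ∧ k ∣ n then 1 else 0 with hc
  have step1 : ∑ p ∈ (Finset.range (n + 2)).filter (fun p => p.Prime ∧ (p - 1) ∣ n),
      (1 : ℚ) / p = ∑ k ∈ range (n + 1), (c k : ℚ) / (k + 1) := by
    rw [Finset.sum_filter, sum_range_succ']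
    have h0 : (if (0 : ℕ).Prime ∧ (0 - 1 : ℕ) ∣ n then (1 : ℚ) / (0 : ℕ) else 0) = 0 := by
      simp [Nat.not_prime_zero]
    rw [h0, add_zero]
    apply sum_congr rfl
    intro k _
    rw [Nat.add_sub_cancel]
    by_cases h : (k + 1).Prime ∧ k ∣ n
    · rw [if_pos h, hc]; simp only [h, if_pos, and_self]; push_cast; ring
    · rw [if_neg h, hc]; simp only [h, if_neg, if_false]; simp [h]
  refine ⟨∑ k ∈ range (n + 1), (vsf k n + c k) / ((k : ℤ) + 1), ?_⟩
  rw [bernoulli_eq_vsb, vsb, step1, ← sum_add_distrib, Int.cast_sum]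
  apply sum_congr rfl
  intro k _
  rw [← add_div, Int.cast_div_charZero (vsf_term_dvd n k hn he)]
  simp only [Int.cast_add, Int.cast_natCast, Int.cast_one]
  rfl
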